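/- arXiv:1509.01180 — 2 statements merged into one kernel-verified Lean document; each statement's English description precedes it below -/
import Mathlib

section
/- In the upper half-plane ℍ, the Green's function G_ℍ(z, w) = (1/(2π)) log |(z − w̄)/(z − w)| satisfies: for every z ∈ ℍ and every ε with 0 < ε < Im(z), ∫_ℝ G_ℍ(z, x + iε) dx = ε. -/
open Complex MeasureTheory Real Filter Set Topology

lemma green_deriv (p q x : ℝ) (hp : 0 < p) (hq : 0 < q) :
    HasDerivAt (fun x : ℝ => x * (Real.log (x^2+p^2) - Real.log (x^2+q^2))
        + (2*p*Real.arctan (x/p) - 2*q*Real.arctan (x/q)))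
      (Real.log (x^2+p^2) - Real.log (x^2+q^2)) x := by
  have hp2 : (0:ℝ) < x^2+p^2 := by positivity
  have hq2 : (0:ℝ) < x^2+q^2 := by positivity
  have d1 : HasDerivAt (fun x : ℝ => x^2+p^2) (2*x) x := by
    simpa using (hasDerivAt_pow 2 x).add_const (p^2)
  have d2 : HasDerivAt (fun x : ℝ => x^2+q^2) (2*x) x := by
    simpa using (hasDerivAt_pow 2 x).add_const (q^2)
  have l1 : HasDerivAt (fun x : ℝ => Real.log (x^2+p^2)) (2*x/(x^2+p^2)) x := d1.log hp2.ne'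
  have l2 : HasDerivAt (fun x : ℝ => Real.log (x^2+q^2)) (2*x/(x^2+q^2)) x := d2.log hq2.ne'
  have a1 : HasDerivAt (fun x : ℝ => Real.arctan (x/p)) (1/(1+(x/p)^2) * (1/p)) x := by
    have := (Real.hasDerivAt_arctan (x/p)).comp x ((hasDerivAt_id x).div_const p)
    exact this
  have a2 : HasDerivAt (fun x : ℝ => Real.arctan (x/q)) (1/(1+(x/q)^2) * (1/q)) x := by
    have := (Real.hasDerivAt_arctan (x/q)).comp x ((hasDerivAt_id x).div_const q)
    exact this
  have h := ((hasDerivAt_id x).mul (l1.sub l2)).add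
    ((a1.const_mul (2*p)).sub (a2.const_mul (2*q)))
  refine h.congr_deriv ?_
  simp only [Pi.sub_apply, id]
  have h1p : (0:ℝ) < 1+(x/p)^2 := by positivity
  have h1q : (0:ℝ) < 1+(x/q)^2 := by positivity
  field_simp
  ring

lemma green_tendsto (p q : ℝ) (hp : 0 < p) (hq : 0 < q) (hpq : q ≤ p) :
    Tendsto (fun x : ℝ => x * (Real.log (x^2+p^2) - Real.log (x^2+q^2))
        + (2*p*Real.arctan (x/p) - 2*q*Real.arctan (x/q))) atTop
      (𝓝 (Real.pi * (p - q))) := by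
  have T1 : Tendsto (fun x : ℝ => x * (Real.log (x^2+p^2) - Real.log (x^2+q^2))) atTop (𝓝 0) := by
    apply squeeze_zero' (g := fun x : ℝ => (p^2-q^2)/x)
    · filter_upwards [eventually_gt_atTop (0:ℝ)] with x hx
      have hq2 : (0:ℝ) < x^2+q^2 := by positivity
      have : Real.log (x^2+q^2) ≤ Real.log (x^2+p^2) :=
        Real.log_le_log hq2 (by nlinarith)
      exact mul_nonneg hx.le (by linarith)
    · filter_upwards [eventually_gt_atTop (0:ℝ)] with x hx
      have hq2 : (0:ℝ) < x^2+q^2 := by positivity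
      have hp2 : (0:ℝ) < x^2+p^2 := by positivity
      have hlog : Real.log (x^2+p^2) - Real.log (x^2+q^2) ≤ (p^2-q^2)/(x^2+q^2) := by
        rw [← Real.log_div hp2.ne' hq2.ne']
        have := Real.log_le_sub_one_of_pos (div_pos hp2 hq2)
        have heq : (x^2+p^2)/(x^2+q^2) - 1 = (p^2-q^2)/(x^2+q^2) := by field_simp; ring
        linarith [heq ▸ this]
      calc x * (Real.log (x^2+p^2) - Real.log (x^2+q^2)) ≤ x * ((p^2-q^2)/(x^2+q^2)) := by
            exact mul_le_mul_of_nonneg_left hlog hx.le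
        _ ≤ (p^2-q^2)/x := by
            have hc : (0:ℝ) ≤ p^2 - q^2 := by nlinarith
            rw [mul_div_assoc', div_le_div_iff₀ (by positivity) hx]
            nlinarith [mul_nonneg hc (sq_nonneg q)]
    · exact Tendsto.div_atTop tendsto_const_nhds tendsto_id
  have T2 : Tendsto (fun x : ℝ => Real.arctan (x/p)) atTop (𝓝 (Real.pi/2)) := by
    exact (tendsto_nhds_of_tendsto_nhdsWithin Real.tendsto_arctan_atTop).comp
      (tendsto_id.atTop_div_const hp)
  have T3 : Tendsto (fun x : ℝ => Real.arctan (x/q)) atTop (𝓝 (Real.pi/2)) := by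
    exact (tendsto_nhds_of_tendsto_nhdsWithin Real.tendsto_arctan_atTop).comp
      (tendsto_id.atTop_div_const hq)
  have := T1.add (((T2.const_mul (2*p)).sub (T3.const_mul (2*q))))
  convert this using 1
  ring

lemma green_integral_Ioi (p q : ℝ) (hq : 0 < q) (hpq : q ≤ p) :
    ∫ x in Ioi (0:ℝ), (Real.log (x^2+p^2) - Real.log (x^2+q^2)) = Real.pi * (p - q) := by
  have hp : 0 < p := hq.trans_le hpq
  have h := integral_Ioi_of_hasDerivAt_of_nonneg' (a := 0)
    (g := fun x : ℝ => x * (Real.log (x^2+p^2) - Real.log (x^2+q^2))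
        + (2*p*Real.arctan (x/p) - 2*q*Real.arctan (x/q)))
    (g' := fun x : ℝ => Real.log (x^2+p^2) - Real.log (x^2+q^2))
    (fun x _ => green_deriv p q x hp hq)
    (fun x hx => by
      show (0:ℝ) ≤ Real.log (x^2+p^2) - Real.log (x^2+q^2)
      have hq2 : (0:ℝ) < x^2+q^2 := by positivity
      have : Real.log (x^2+q^2) ≤ Real.log (x^2+p^2) :=
        Real.log_le_log hq2 (by nlinarith)
      linarith)
    (green_tendsto p q hp hq hpq)
  simpa using h

lemma green_integral_total (p q : ℝ) (hq : 0 < q) (hpq : q ≤ p) :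
    ∫ x : ℝ, (Real.log (x^2+p^2) - Real.log (x^2+q^2)) = 2 * (Real.pi * (p - q)) := by
  have heven : ∀ x : ℝ, Real.log (|x|^2+p^2) - Real.log (|x|^2+q^2)
      = Real.log (x^2+p^2) - Real.log (x^2+q^2) := fun x => by rw [_root_.sq_abs]
  calc ∫ x : ℝ, (Real.log (x^2+p^2) - Real.log (x^2+q^2))
      = ∫ x : ℝ, (Real.log (|x|^2+p^2) - Real.log (|x|^2+q^2)) := by
        simp_rw [heven]
    _ = 2 * ∫ x in Ioi (0:ℝ), (Real.log (x^2+p^2) - Real.log (x^2+q^2)) :=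
        integral_comp_abs (f := fun x => Real.log (x^2+p^2) - Real.log (x^2+q^2))
    _ = 2 * (Real.pi * (p - q)) := by rw [green_integral_Ioi p q hq hpq]

/-- For the Green's function of the upper half-plane,
`∫_ℝ G_ℍ(z, x + iε) dx = ε` whenever `0 < ε < Im z`. -/
theorem integral_halfPlane_green_eq (z : ℂ) (ε : ℝ) (hε : 0 < ε) (hεz : ε < z.im) :
    ∫ x : ℝ,
      (1 / (2 * Real.pi)) *
        Real.log (‖(z - ((x : ℂ) - ε * Complex.I)) /
          (z - ((x : ℂ) + ε * Complex.I))‖) = ε := by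
  set a := z.re
  set b := z.im
  have hb : 0 < b - ε := by simp [b]; linarith
  have hq : 0 < b - ε := hb
  have hp : 0 < b + ε := by linarith
  have key : ∀ x : ℝ,
      (1 / (2 * Real.pi)) *
        Real.log (‖(z - ((x : ℂ) - ε * Complex.I)) /
          (z - ((x : ℂ) + ε * Complex.I))‖)
      = (1 / (4 * Real.pi)) * (Real.log ((x-a)^2+(b+ε)^2) - Real.log ((x-a)^2+(b-ε)^2)) := by
    intro x
    have hNu : Complex.normSq (z - ((x : ℂ) - ε * Complex.I)) = (x-a)^2+(b+ε)^2 := by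
      simp [Complex.normSq_apply, Complex.sub_re, Complex.sub_im, a, b]
      ring
    have hNv : Complex.normSq (z - ((x : ℂ) + ε * Complex.I)) = (x-a)^2+(b-ε)^2 := by
      simp [Complex.normSq_apply, Complex.sub_re, Complex.sub_im, a, b]
      ring
    have hNup : (0:ℝ) < (x-a)^2+(b+ε)^2 := by positivity
    have hNvp : (0:ℝ) < (x-a)^2+(b-ε)^2 := by positivity
    have hu : ‖z - ((x : ℂ) - ε * Complex.I)‖ = Real.sqrt ((x-a)^2+(b+ε)^2) := by
      rw [Complex.norm_def, hNu]
    have hv : ‖z - ((x : ℂ) + ε * Complex.I)‖ = Real.sqrt ((x-a)^2+(b-ε)^2) := by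
      rw [Complex.norm_def, hNv]
    rw [norm_div, hu, hv, Real.log_div (by positivity) (by positivity),
      Real.log_sqrt hNup.le, Real.log_sqrt hNvp.le]
    ring
  simp_rw [key]
  rw [MeasureTheory.integral_const_mul]
  have hsub : ∫ x : ℝ, (Real.log ((x-a)^2+(b+ε)^2) - Real.log ((x-a)^2+(b-ε)^2))
      = ∫ x : ℝ, (Real.log (x^2+(b+ε)^2) - Real.log (x^2+(b-ε)^2)) :=
    integral_sub_right_eq_self (fun x => Real.log (x^2+(b+ε)^2) - Real.log (x^2+(b-ε)^2)) a
  rw [hsub, green_integral_total (b+ε) (b-ε) hq (by linarith)]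
  have hπ : Real.pi ≠ 0 := Real.pi_ne_zero
  field_simp
  ring
end

section
/- Let φ : ℝ → ℂ be a characteristic function of a real random variable that is nonvanishing on a dense subset D of ℝ. If X, Y, Z are real random variables with Y, Z each independent of X, and X + Y has the same distribution as X + Z, and additionally the characteristic function of X is nonzero on D, then Y and Z have the same distribution, provided the characteristic functions of Y and Z are continuous (which they always are). -/
open MeasureTheory ProbabilityTheory Complex Filter Set BoundedContinuousFunction


/-- The characteristic function of a measure on `ℝ`. -/
noncomputable def charFunOf (μ : Measure ℝ) (t : ℝ) : ℂ :=
  ∫ x, Complex.exp (↑(t * x) * Complex.I) ∂μ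

lemma charFunOf_continuous (μ : Measure ℝ) [IsProbabilityMeasure μ] :
    Continuous (charFunOf μ) := by
  apply continuous_of_dominated (bound := fun _ => 1)
  · intro t
    refine (Continuous.aestronglyMeasurable ?_)
    exact (Complex.continuous_exp.comp ((Complex.continuous_ofReal.comp
      (continuous_const.mul continuous_id)).mul continuous_const))
  · intro t
    refine Eventually.of_forall fun x => ?_
    simp [Complex.norm_exp]
  · exact integrable_const 1
  · refine Eventually.of_forall fun x => ?_
    exact (Complex.continuous_exp.comp ((Complex.continuous_ofReal.comp
      (continuous_id.mul continuous_const)).mul continuous_const))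

lemma charFunOf_map {Ω : Type*} [MeasurableSpace Ω] (P : Measure Ω)
    (X : Ω → ℝ) (hX : Measurable X) (t : ℝ) :
    charFunOf (Measure.map X P) t = ∫ ω, Complex.exp (↑(t * X ω) * Complex.I) ∂P := by
  rw [charFunOf, integral_map hX.aemeasurable]
  exact (Complex.continuous_exp.comp ((Complex.continuous_ofReal.comp
    (continuous_const.mul continuous_id)).mul continuous_const)).aestronglyMeasurable

lemma charFunOf_add_indep {Ω : Type*} [MeasurableSpace Ω] (P : Measure Ω)
    [IsProbabilityMeasure P] (X Y : Ω → ℝ) (hX : Measurable X) (hY : Measurable Y)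
    (h : IndepFun X Y P) (t : ℝ) :
    charFunOf (Measure.map (fun ω => X ω + Y ω) P) t
      = charFunOf (Measure.map X P) t * charFunOf (Measure.map Y P) t := by
  rw [charFunOf_map _ (fun ω => X ω + Y ω) (hX.add hY), charFunOf_map _ _ hX, charFunOf_map _ _ hY]
  have hmap : Measure.map (fun ω => (X ω, Y ω)) P
      = (Measure.map X P).prod (Measure.map Y P) :=
    (indepFun_iff_map_prod_eq_prod_map_map hX.aemeasurable hY.aemeasurable).mp h
  have : ∫ ω, Complex.exp (↑(t * (X ω + Y ω)) * Complex.I) ∂P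
      = ∫ p : ℝ × ℝ, Complex.exp (↑(t * p.1) * Complex.I)
          * Complex.exp (↑(t * p.2) * Complex.I) ∂((Measure.map X P).prod (Measure.map Y P)) := by
    rw [← hmap, integral_map (hX.prodMk hY).aemeasurable]
    · congr 1
      ext ω
      rw [← Complex.exp_add]
      congr 1
      push_cast
      ring
    · apply Continuous.aestronglyMeasurable
      fun_prop
  rw [this,
    integral_prod_mul (f := fun x : ℝ => Complex.exp (↑(t * x) * Complex.I))
      (g := fun x : ℝ => Complex.exp (↑(t * x) * Complex.I)),
    ← charFunOf, ← charFunOf, charFunOf_map _ _ hX, charFunOf_map _ _ hY]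

lemma integral_continuousMap_eq_of_fourier {T : ℝ} [hT : Fact (0 < T)]
    (μ ν : Measure (AddCircle T)) [IsProbabilityMeasure μ] [IsProbabilityMeasure ν]
    (h : ∀ n : ℤ, ∫ x, fourier n x ∂μ = ∫ x, fourier n x ∂ν)
    (f : C(AddCircle T, ℂ)) : ∫ x, f x ∂μ = ∫ x, f x ∂ν := by
  have int : ∀ (κ : Measure (AddCircle T)) [IsProbabilityMeasure κ]
      (g : C(AddCircle T, ℂ)), Integrable g κ := fun κ _ g =>
    (BoundedContinuousFunction.mkOfCompact g).integrable κ
  have hlip : ∀ (κ : Measure (AddCircle T)) [IsProbabilityMeasure κ],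
      LipschitzWith 1 (fun g : C(AddCircle T, ℂ) => ∫ x, g x ∂κ) := by
    intro κ _
    refine LipschitzWith.of_dist_le_mul fun g₁ g₂ => ?_
    rw [dist_eq_norm, dist_eq_norm, ← integral_sub (int κ g₁) (int κ g₂)]
    have := (BoundedContinuousFunction.mkOfCompact (g₁ - g₂)).norm_integral_le_norm (μ := κ)
    simp only [BoundedContinuousFunction.mkOfCompact_apply, ContinuousMap.coe_sub, Pi.sub_apply,
      BoundedContinuousFunction.norm_mkOfCompact] at this
    calc ‖∫ x, (g₁ x - g₂ x) ∂κ‖ ≤ ‖g₁ - g₂‖ := this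
      _ ≤ 1 * ‖g₁ - g₂‖ := by rw [one_mul]
    
  let S : Submodule ℂ C(AddCircle T, ℂ) :=
    { carrier := {g | ∫ x, g x ∂μ = ∫ x, g x ∂ν}
      add_mem' := by
        intro g₁ g₂ h₁ h₂
        simp only [Set.mem_setOf_eq, ContinuousMap.coe_add, Pi.add_apply] at *
        rw [integral_add (int μ g₁) (int μ g₂), integral_add (int ν g₁) (int ν g₂), h₁, h₂]
      zero_mem' := by simp
      smul_mem' := by
        intro c g hg
        simp only [Set.mem_setOf_eq, ContinuousMap.coe_smul, Pi.smul_apply] at *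
        rw [integral_smul, integral_smul, hg] }
  have hclosed : IsClosed (S : Set C(AddCircle T, ℂ)) := by
    have : (S : Set C(AddCircle T, ℂ))
        = (fun g : C(AddCircle T, ℂ) => (∫ x, g x ∂μ) - ∫ x, g x ∂ν) ⁻¹' {0} := by
      ext g
      simp [S, sub_eq_zero]
    rw [this]
    exact IsClosed.preimage (((hlip μ).continuous).sub ((hlip ν).continuous)) isClosed_singleton
  have hspan : (⊤ : Submodule ℂ C(AddCircle T, ℂ)) ≤ S := by
    rw [← span_fourier_closure_eq_top]
    refine Submodule.topologicalClosure_minimal _ ?_ hclosed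
    rw [Submodule.span_le]
    rintro g ⟨n, rfl⟩
    exact h n
  exact hspan (Submodule.mem_top) 

lemma measure_addCircle_ext_of_fourier {T : ℝ} [hT : Fact (0 < T)]
    (μ ν : Measure (AddCircle T)) [IsProbabilityMeasure μ] [IsProbabilityMeasure ν]
    (h : ∀ n : ℤ, ∫ x, fourier n x ∂μ = ∫ x, fourier n x ∂ν) : μ = ν := by
  apply ext_of_forall_lintegral_eq_of_IsFiniteMeasure
  intro f
  have key := integral_continuousMap_eq_of_fourier μ ν h
    ⟨fun x => ((f x : ℝ) : ℂ), by continuity⟩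
  simp only [ContinuousMap.coe_mk] at key
  have e1 : ∀ (κ : Measure (AddCircle T)),
      ∫ x, ((f x : ℝ) : ℂ) ∂κ = ((∫ x, ((f x : ℝ)) ∂κ : ℝ) : ℂ) := fun κ => integral_ofReal
  rw [e1, e1] at key
  have hr : ∫ x, ((f x : ℝ)) ∂μ = ∫ x, ((f x : ℝ)) ∂ν := by exact_mod_cast key
  rw [← f.toReal_lintegral_coe_eq_integral μ, ← f.toReal_lintegral_coe_eq_integral ν] at hr
  exact (ENNReal.toReal_eq_toReal_iff' (f.lintegral_lt_top_of_nnreal μ).ne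
    (f.lintegral_lt_top_of_nnreal ν).ne).mp hr


lemma integral_fourier_map_addCircle {T : ℝ} [Fact (0 < T)]
    (μ : Measure ℝ) [IsProbabilityMeasure μ] (n : ℤ) :
    ∫ y, fourier n y ∂(Measure.map ((↑) : ℝ → AddCircle T) μ)
      = charFunOf μ (2 * Real.pi * n / T) := by
  rw [integral_map AddCircle.measurable_mk'.aemeasurable
    (Continuous.aestronglyMeasurable ((fourier n).continuous))]
  rw [charFunOf]
  congr 1
  ext x
  rw [fourier_coe_apply]
  congr 1
  push_cast
  ring

lemma Iic_le_of_map_addCircle_eq (μ ν : Measure ℝ) [IsProbabilityMeasure μ]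
    [IsProbabilityMeasure ν]
    (hcirc : ∀ T : ℝ, 0 < T →
      Measure.map ((↑) : ℝ → AddCircle T) μ = Measure.map ((↑) : ℝ → AddCircle T) ν)
    (a : ℝ) : μ (Iic a) ≤ ν (Iic a) := by
  have hfg : ∀ n : ℕ, μ (Ioc (a - ((n : ℝ) + 1)) a)
      ≤ ν (Ioc (a - ((n : ℝ) + 1)) a) + ν (Iic (a - ((n : ℝ) + 1)))
        + ν (Ioi (a + ((n : ℝ) + 1))) := by
    intro n
    set m : ℝ := (n : ℝ) + 1 with hm
    have hm0 : 0 < m := by positivity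
    set T : ℝ := 3 * m with hTdef
    have hT0 : 0 < T := by positivity
    haveI : Fact (0 < T) := ⟨hT0⟩
    set c : ℝ := a - T with hc
    set E : Set ℝ := Ioc (a - m) a with hE
    have hEmeas : MeasurableSet E := measurableSet_Ioc
    set r : AddCircle T → ℝ := fun y => ((AddCircle.measurableEquivIoc T c y : ℝ)) with hrdef
    have hr : Measurable r :=
      measurable_subtype_coe.comp (AddCircle.measurableEquivIoc T c).measurable
    set B : Set (AddCircle T) := r ⁻¹' E with hB
    have hBmeas : MeasurableSet B := hr hEmeas
    have hpre : ((↑) : ℝ → AddCircle T) ⁻¹' B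
        = {x : ℝ | toIocMod (Fact.out : (0:ℝ) < T) c x ∈ E} := by
      ext x
      simp only [mem_preimage, hB, mem_setOf_eq, hrdef]
      have : (AddCircle.measurableEquivIoc T c (x : AddCircle T) : ℝ)
          = toIocMod (Fact.out : (0:ℝ) < T) c x := by
        show ((AddCircle.equivIoc T c (x : AddCircle T) : ℝ)) = _
        rw [AddCircle.equivIoc]
        rw [QuotientAddGroup.equivIocMod_coe]
      rw [this]
    have hsub1 : E ⊆ ((↑) : ℝ → AddCircle T) ⁻¹' B := by
      intro x hx
      rw [hpre]
      have hxIoc : x ∈ Ioc c (c + T) := by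
        constructor
        · have h1 : c ≤ a - m := by
            rw [hc, hTdef]
            nlinarith
          exact lt_of_le_of_lt h1 hx.1
        · rw [hc]
          simpa using hx.2
      simpa [mem_setOf_eq, (toIocMod_eq_self (Fact.out : (0:ℝ) < T)).2 hxIoc] using hx
    have hsub2 : ((↑) : ℝ → AddCircle T) ⁻¹' B
        ⊆ E ∪ (Iic (a - m) ∪ Ioi (a + m)) := by
      intro x hx
      rw [hpre] at hx
      set y := toIocMod (Fact.out : (0:ℝ) < T) c x with hy
      have hyE : y ∈ E := hx
      have hk : x - y = toIocDiv (Fact.out : (0:ℝ) < T) c x • T :=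
        self_sub_toIocMod (Fact.out : (0:ℝ) < T) c x
      set k := toIocDiv (Fact.out : (0:ℝ) < T) c x with hkdef
      rcases lt_trichotomy k 0 with hk0 | hk0 | hk0
      · right; left
        have hk1 : (k : ℝ) ≤ -1 := by
          have : k ≤ -1 := by omega
          exact_mod_cast this
        have : x = y + (k : ℝ) * T := by
          rw [← zsmul_eq_mul, ← hk]; ring
        have hxle : x ≤ a + (-1) * T := by
          rw [this]
          have : (k : ℝ) * T ≤ -1 * T := by nlinarith
          nlinarith [hyE.2]
        simp only [mem_Iic]
        rw [hTdef] at hxle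
        linarith
      · left
        have : x = y := by
          have : x - y = 0 := by rw [hk, hk0]; simp
          linarith
        rwa [this]
      · right; right
        have hk1 : (1 : ℝ) ≤ (k : ℝ) := by exact_mod_cast hk0
        have hxeq : x = y + (k : ℝ) * T := by
          rw [← zsmul_eq_mul, ← hk]; ring
        have : a - m + T ≤ y + (k : ℝ) * T := by nlinarith [hyE.1]
        simp only [mem_Ioi]
        rw [hxeq, hTdef] at *
        nlinarith [hyE.1]
    calc μ E ≤ μ (((↑) : ℝ → AddCircle T) ⁻¹' B) := measure_mono hsub1
      _ = Measure.map ((↑) : ℝ → AddCircle T) μ B :=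
          (Measure.map_apply AddCircle.measurable_mk' hBmeas).symm
      _ = Measure.map ((↑) : ℝ → AddCircle T) ν B := by rw [hcirc T hT0]
      _ = ν (((↑) : ℝ → AddCircle T) ⁻¹' B) :=
          Measure.map_apply AddCircle.measurable_mk' hBmeas
      _ ≤ ν (E ∪ (Iic (a - m) ∪ Ioi (a + m))) := measure_mono hsub2
      _ ≤ ν E + (ν (Iic (a - m)) + ν (Ioi (a + m))) :=
          le_trans (measure_union_le _ _) (by gcongr; exact measure_union_le _ _)
      _ = ν E + ν (Iic (a - m)) + ν (Ioi (a + m)) := by ring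
  -- limits
  have hmono : Monotone fun n : ℕ => Ioc (a - ((n : ℝ) + 1)) a := by
    intro i j hij
    apply Ioc_subset_Ioc_left
    have : (i : ℝ) ≤ j := by exact_mod_cast hij
    linarith
  have hUnion : ⋃ n : ℕ, Ioc (a - ((n : ℝ) + 1)) a = Iic a := by
    ext x
    simp only [mem_iUnion, mem_Ioc, mem_Iic]
    constructor
    · rintro ⟨n, _, hx⟩; exact hx
    · intro hx
      obtain ⟨n, hn⟩ := exists_nat_gt (a - x)
      exact ⟨n, by linarith, hx⟩
  have hf : Tendsto (fun n : ℕ => μ (Ioc (a - ((n : ℝ) + 1)) a)) atTop (nhds (μ (Iic a))) := by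
    rw [← hUnion]
    exact tendsto_measure_iUnion_atTop hmono
  have hg1 : Tendsto (fun n : ℕ => ν (Ioc (a - ((n : ℝ) + 1)) a)) atTop (nhds (ν (Iic a))) := by
    rw [← hUnion]
    exact tendsto_measure_iUnion_atTop hmono
  have hg2 : Tendsto (fun n : ℕ => ν (Iic (a - ((n : ℝ) + 1)))) atTop (nhds 0) := by
    have hinter : ⋂ n : ℕ, Iic (a - ((n : ℝ) + 1)) = ∅ := by
      ext x
      simp only [mem_iInter, mem_Iic, mem_empty_iff_false, iff_false, not_forall, not_le]
      obtain ⟨n, hn⟩ := exists_nat_gt (a - x)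
      exact ⟨n, by linarith⟩
    have := tendsto_measure_iInter_atTop (μ := ν)
      (fun n : ℕ => (measurableSet_Iic (a := a - ((n : ℝ) + 1))).nullMeasurableSet)
      (fun i j hij => Iic_subset_Iic.2 (by
        have : (i : ℝ) ≤ j := by exact_mod_cast hij
        linarith))
      ⟨0, measure_ne_top ν _⟩
    rwa [hinter, measure_empty] at this
  have hg3 : Tendsto (fun n : ℕ => ν (Ioi (a + ((n : ℝ) + 1)))) atTop (nhds 0) := by
    have hinter : ⋂ n : ℕ, Ioi (a + ((n : ℝ) + 1)) = ∅ := by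
      ext x
      simp only [mem_iInter, mem_Ioi, mem_empty_iff_false, iff_false, not_forall, not_lt]
      obtain ⟨n, hn⟩ := exists_nat_gt (x - a)
      exact ⟨n, by linarith⟩
    have := tendsto_measure_iInter_atTop (μ := ν)
      (fun n : ℕ => (measurableSet_Ioi (a := a + ((n : ℝ) + 1))).nullMeasurableSet)
      (fun i j hij => Ioi_subset_Ioi (by
        have : (i : ℝ) ≤ j := by exact_mod_cast hij
        linarith))
      ⟨0, measure_ne_top ν _⟩
    rwa [hinter, measure_empty] at this
  have hg : Tendsto (fun n : ℕ => ν (Ioc (a - ((n : ℝ) + 1)) a) + ν (Iic (a - ((n : ℝ) + 1)))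
      + ν (Ioi (a + ((n : ℝ) + 1)))) atTop (nhds (ν (Iic a) + 0 + 0)) :=
    (hg1.add hg2).add hg3
  have := le_of_tendsto_of_tendsto' hf hg hfg
  simpa using this

theorem ext_of_charFunOf (μ ν : Measure ℝ) [IsProbabilityMeasure μ] [IsProbabilityMeasure ν]
    (h : ∀ t, charFunOf μ t = charFunOf ν t) : μ = ν := by
  have hcirc : ∀ T : ℝ, 0 < T →
      Measure.map ((↑) : ℝ → AddCircle T) μ = Measure.map ((↑) : ℝ → AddCircle T) ν := by
    intro T hT0
    haveI : Fact (0 < T) := ⟨hT0⟩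
    haveI : IsProbabilityMeasure (Measure.map ((↑) : ℝ → AddCircle T) μ) :=
      Measure.isProbabilityMeasure_map AddCircle.measurable_mk'.aemeasurable
    haveI : IsProbabilityMeasure (Measure.map ((↑) : ℝ → AddCircle T) ν) :=
      Measure.isProbabilityMeasure_map AddCircle.measurable_mk'.aemeasurable
    apply measure_addCircle_ext_of_fourier
    intro n
    rw [integral_fourier_map_addCircle, integral_fourier_map_addCircle, h]
  refine MeasureTheory.Measure.ext_of_Iic μ ν fun a => ?_
  exact le_antisymm (Iic_le_of_map_addCircle_eq μ ν hcirc a)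
    (Iic_le_of_map_addCircle_eq ν μ (fun T hT => (hcirc T hT).symm) a)

/-- Cancellation of an independent summand whose characteristic function does not vanish on
a dense set: if `X + Y =ᵈ X' + Z` with `Y ⊥ X`, `Z ⊥ X'`, `X =ᵈ X'` and the characteristic
function of `X` is nonzero on a dense set, then `Y =ᵈ Z`. -/
theorem eq_distrib_of_add_indep_charFun_ne_zero
    {Ω Ω' : Type*} [MeasurableSpace Ω] [MeasurableSpace Ω']
    (P : Measure Ω) [IsProbabilityMeasure P] (P' : Measure Ω') [IsProbabilityMeasure P']
    (X Y : Ω → ℝ) (X' Z : Ω' → ℝ)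
    (hX : Measurable X) (hY : Measurable Y) (hX' : Measurable X') (hZ : Measurable Z)
    (hXX' : Measure.map X P = Measure.map X' P')
    (hXYindep : IndepFun X Y P) (hXZindep : IndepFun X' Z P')
    (hsum : Measure.map (fun ω => X ω + Y ω) P = Measure.map (fun ω => X' ω + Z ω) P')
    (D : Set ℝ) (hD : Dense D)
    (hne : ∀ t ∈ D, charFunOf (Measure.map X P) t ≠ 0) :
    Measure.map Y P = Measure.map Z P' := by
  haveI : IsProbabilityMeasure (Measure.map Y P) :=
    Measure.isProbabilityMeasure_map hY.aemeasurable
  haveI : IsProbabilityMeasure (Measure.map Z P') :=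
    Measure.isProbabilityMeasure_map hZ.aemeasurable
  have hDeq : Set.EqOn (charFunOf (Measure.map Y P)) (charFunOf (Measure.map Z P')) D := by
    intro t ht
    have h1 := charFunOf_add_indep P X Y hX hY hXYindep t
    have h2 := charFunOf_add_indep P' X' Z hX' hZ hXZindep t
    rw [hsum] at h1
    rw [h1, ← hXX'] at h2
    exact mul_left_cancel₀ (hne t ht) h2
  have heq : charFunOf (Measure.map Y P) = charFunOf (Measure.map Z P') :=
    Continuous.ext_on hD (charFunOf_continuous _) (charFunOf_continuous _) hDeq
  exact ext_of_charFunOf _ _ fun t => congrFun heq t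
end
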